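/- Let C ⊆ F_q^n be a k-dimensional F_q-linear code, let K be a finite field of characteristic p with q^k elements, let κ : K → Hom_{F_p}(C,F_p) be an F_p-linear isomorphism, write f_λ = κ(λ), and let D ⊆ K^m be an s-dimensional K-linear code with s ≥ 1. Then every element of D^Θ ∖ (C^⊥)^m has Hamming weight at least d(D); that is, ℓ := min{wt(X) : X ∈ D^Θ ∖ (C^⊥)^m} ≥ d(D). Consequently, if d(C) ≤ d(D), then min{d(C), ℓ} = d(C). -/

import Mathlib

open Matrix

attribute [local instance] Classical.propDecidable

section Aux

variable (p n : ℕ) [Fact p.Prime] (F : Type) [Field F] [Fintype F] [Algebra (ZMod p) F]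

/-- The `ZMod p`-linear map sending `x` to the functional `y ↦ Tr(x ⬝ᵥ y)`. -/
noncomputable def traceDual : (Fin n → F) →ₗ[ZMod p] ((Fin n → F) →ₗ[ZMod p] ZMod p) where
  toFun x :=
    { toFun := fun y => Algebra.trace (ZMod p) F (x ⬝ᵥ y)
      map_add' := fun y₁ y₂ => by simp only [dotProduct_add, map_add]
      map_smul' := fun a y => by simp only [dotProduct_smul, _root_.map_smul]; rfl }
  map_add' x₁ x₂ := by ext y; simp [add_dotProduct]
  map_smul' a x := by ext y; simp [smul_dotProduct]

@[simp] lemma traceDual_apply (x y : Fin n → F) :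
    traceDual p n F x y = Algebra.trace (ZMod p) F (x ⬝ᵥ y) := rfl

lemma tr_nd {a : F} (h : ∀ b : F, Algebra.trace (ZMod p) F (b * a) = 0) : a = 0 := by
  have : FiniteDimensional (ZMod p) F := Module.Finite.of_finite
  exact (traceForm_nondegenerate (ZMod p) F).1 a (fun b => by
    rw [Algebra.traceForm_apply, mul_comm]; exact h b)

lemma traceDual_surj : Function.Surjective (traceDual p n F) := by
  have : FiniteDimensional (ZMod p) F := Module.Finite.of_finite
  rw [← LinearMap.injective_iff_surjective_of_finrank_eq_finrank Subspace.dual_finrank_eq.symm]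
  rw [← LinearMap.ker_eq_bot, Submodule.eq_bot_iff]
  intro x hx
  have hx' : ∀ y, Algebra.trace (ZMod p) F (x ⬝ᵥ y) = 0 := by
    intro y
    have : traceDual p n F x y = (0 : (Fin n → F) →ₗ[ZMod p] ZMod p) y := by rw [hx]
    simpa using this
  funext j
  refine tr_nd p F (fun b => ?_)
  have := hx' (Pi.single j b)
  rwa [dotProduct_single, mul_comm] at this

end Aux

/-- every element of `D^Θ ∖ (C^⊥)^m` has Hamming weight at least `d(D)`
(so `ℓ ≥ d(D)`); consequently if `d(C) ≤ d(D)` then `min{d(C), ℓ} = d(C)`. -/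
theorem stmt_11 (p r n k m s : ℕ) [Fact p.Prime] (hr : 0 < r) (hs1 : 1 ≤ s)
    (F K : Type) [Field F] [Fintype F] [Algebra (ZMod p) F] (hF : Fintype.card F = p ^ r)
    [Field K] [Fintype K] [Algebra (ZMod p) K] (hK : Fintype.card K = (p ^ r) ^ k)
    (C : Submodule F (Fin n → F)) (hC : Module.finrank F C = k)
    (κ : K ≃ₗ[ZMod p] (↥C →ₗ[ZMod p] ZMod p))
    (D : Submodule K (Fin m → K)) (hD : Module.finrank K ↥D = s) :
    (∀ z : Fin m → Fin n → F,
      (∃ Λ ∈ D, ∀ (i : Fin m) (c : ↥C),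
          Algebra.trace (ZMod p) F (z i ⬝ᵥ (c : Fin n → F)) = κ (Λ i) c) →
      ¬(∀ i : Fin m, ∀ y ∈ C, z i ⬝ᵥ y = 0) →
      sInf {w : ℕ | ∃ Λ ∈ D, Λ ≠ 0 ∧ w = hammingNorm Λ} ≤ ∑ i : Fin m, hammingNorm (z i))
    ∧ (sInf {w : ℕ | ∃ c ∈ C, c ≠ 0 ∧ w = hammingNorm c}
          ≤ sInf {w : ℕ | ∃ Λ ∈ D, Λ ≠ 0 ∧ w = hammingNorm Λ} →
        min (sInf {w : ℕ | ∃ c ∈ C, c ≠ 0 ∧ w = hammingNorm c})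
            (sInf {w : ℕ | ∃ z : Fin m → Fin n → F,
              (∃ Λ ∈ D, ∀ (i : Fin m) (c : ↥C),
                Algebra.trace (ZMod p) F (z i ⬝ᵥ (c : Fin n → F)) = κ (Λ i) c)
              ∧ ¬(∀ i : Fin m, ∀ y ∈ C, z i ⬝ᵥ y = 0)
              ∧ w = ∑ i : Fin m, hammingNorm (z i)})
          = sInf {w : ℕ | ∃ c ∈ C, c ≠ 0 ∧ w = hammingNorm c}) := by
  classical
  -- key equivalence: for a vector matching `κ lam` through the trace pairing,
  -- orthogonality to `C` is equivalent to `lam = 0`.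
  have key : ∀ (z : Fin n → F) (lam : K),
      (∀ c : ↥C, Algebra.trace (ZMod p) F (z ⬝ᵥ (c : Fin n → F)) = κ lam c) →
      ((∀ y ∈ C, z ⬝ᵥ y = 0) ↔ lam = 0) := by
    intro z lam h
    constructor
    · intro hperp
      apply κ.injective
      rw [map_zero]
      ext c
      have hzc : z ⬝ᵥ (c : Fin n → F) = 0 := hperp c c.2
      have := h c
      rw [hzc, map_zero] at this
      simpa using this.symm
    · intro h0 y hy
      refine tr_nd p F (fun b => ?_)
      have hby : b • y ∈ C := C.smul_mem b hy
      have := h ⟨b • y, hby⟩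
      rw [h0, map_zero] at this
      have hz : z ⬝ᵥ (b • y) = b * (z ⬝ᵥ y) := by
        rw [dotProduct_smul, smul_eq_mul]
      simp only [LinearMap.zero_apply] at this
      rw [← hz]
      exact this
  -- Part 1
  have part1 : ∀ z : Fin m → Fin n → F,
      (∃ Λ ∈ D, ∀ (i : Fin m) (c : ↥C),
          Algebra.trace (ZMod p) F (z i ⬝ᵥ (c : Fin n → F)) = κ (Λ i) c) →
      ¬(∀ i : Fin m, ∀ y ∈ C, z i ⬝ᵥ y = 0) →
      sInf {w : ℕ | ∃ Λ ∈ D, Λ ≠ 0 ∧ w = hammingNorm Λ} ≤ ∑ i : Fin m, hammingNorm (z i) := by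
    rintro z ⟨Λ, hΛD, hmatch⟩ hnot
    have hΛne : Λ ≠ 0 := by
      intro h0
      apply hnot
      intro i y hy
      exact (key (z i) (Λ i) (hmatch i)).2 (by rw [h0]; rfl) y hy
    have hmem : hammingNorm Λ ∈ {w : ℕ | ∃ Λ ∈ D, Λ ≠ 0 ∧ w = hammingNorm Λ} :=
      ⟨Λ, hΛD, hΛne, rfl⟩
    refine le_trans (Nat.sInf_le hmem) ?_
    have hzi : ∀ i : Fin m, Λ i ≠ 0 → 1 ≤ hammingNorm (z i) := by
      intro i hi
      rw [Nat.one_le_iff_ne_zero, hammingNorm_ne_zero_iff]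
      intro hz0
      apply hi
      refine (key (z i) (Λ i) (hmatch i)).1 (fun y _ => ?_)
      rw [hz0, zero_dotProduct]
    calc hammingNorm Λ = ∑ i ∈ Finset.univ.filter (fun i => Λ i ≠ 0), 1 := by
          rw [Finset.sum_const, smul_eq_mul, mul_one]
          rfl
      _ ≤ ∑ i ∈ Finset.univ.filter (fun i => Λ i ≠ 0), hammingNorm (z i) :=
          Finset.sum_le_sum (fun i hi => hzi i (Finset.mem_filter.1 hi).2)
      _ ≤ ∑ i : Fin m, hammingNorm (z i) :=
          Finset.sum_le_sum_of_subset (Finset.filter_subset _ _)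
  refine ⟨part1, ?_⟩
  -- Part 2
  intro hle
  have hFD : FiniteDimensional (ZMod p) F := Module.Finite.of_finite
  -- D is nontrivial
  obtain ⟨Λ₀, hΛ₀D, hΛ₀ne⟩ : ∃ Λ₀ ∈ D, Λ₀ ≠ 0 := by
    by_contra h
    push_neg at h
    have hbot : D = ⊥ := (Submodule.eq_bot_iff D).2 h
    rw [hbot, finrank_bot] at hD
    omega
  -- inclusion of C as a ZMod p-linear map
  let ι : ↥C →ₗ[ZMod p] (Fin n → F) :=
    { toFun := fun c => (c : Fin n → F)
      map_add' := fun _ _ => rfl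
      map_smul' := fun _ _ => rfl }
  have hι : Function.Injective ι := Subtype.val_injective
  obtain ⟨g, hg⟩ := ι.exists_leftInverse_of_injective (LinearMap.ker_eq_bot.2 hι)
  -- for each lam, find a vector representing κ lam through the trace pairing
  have hex : ∀ lam : K, ∃ x : Fin n → F,
      ∀ c : ↥C, Algebra.trace (ZMod p) F (x ⬝ᵥ (c : Fin n → F)) = κ lam c := by
    intro lam
    obtain ⟨x, hx⟩ := traceDual_surj p n F ((κ lam).comp g)
    refine ⟨x, fun c => ?_⟩
    have h1 : traceDual p n F x (ι c) = ((κ lam).comp g) (ι c) := by rw [hx]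
    have h2 : g (ι c) = c := congrFun (congrArg (fun f => f.toFun) hg) c
    simp only [traceDual_apply, LinearMap.comp_apply, h2] at h1
    exact h1
  choose xv hxv using hex
  set z₀ : Fin m → Fin n → F := fun i => xv (Λ₀ i) with hz₀
  have hz₀match : ∃ Λ ∈ D, ∀ (i : Fin m) (c : ↥C),
      Algebra.trace (ZMod p) F (z₀ i ⬝ᵥ (c : Fin n → F)) = κ (Λ i) c :=
    ⟨Λ₀, hΛ₀D, fun i c => hxv (Λ₀ i) c⟩
  have hz₀not : ¬(∀ i : Fin m, ∀ y ∈ C, z₀ i ⬝ᵥ y = 0) := by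
    intro h
    apply hΛ₀ne
    funext i
    exact (key (z₀ i) (Λ₀ i) (fun c => hxv (Λ₀ i) c)).1 (h i)
  set S := {w : ℕ | ∃ z : Fin m → Fin n → F,
      (∃ Λ ∈ D, ∀ (i : Fin m) (c : ↥C),
        Algebra.trace (ZMod p) F (z i ⬝ᵥ (c : Fin n → F)) = κ (Λ i) c)
      ∧ ¬(∀ i : Fin m, ∀ y ∈ C, z i ⬝ᵥ y = 0)
      ∧ w = ∑ i : Fin m, hammingNorm (z i)} with hS
  have hSne : S.Nonempty := ⟨∑ i : Fin m, hammingNorm (z₀ i), z₀, hz₀match, hz₀not, rfl⟩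
  have hdC_le : sInf {w : ℕ | ∃ c ∈ C, c ≠ 0 ∧ w = hammingNorm c} ≤ sInf S := by
    refine le_csInf hSne ?_
    rintro w ⟨z, hmatch, hnot, rfl⟩
    exact le_trans hle (part1 z hmatch hnot)
  exact min_eq_left hdC_le
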